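/- Let μ be a k-rectifiable Radon measure on ℝⁿ and g ∈ L¹_loc(μ) a nonnegative density function satisfying μ = g·(Hᵏ⌊M) for a countably k-rectifiable set M with 0 < g < ∞ Hᵏ-a.e. on M. Then at Hᵏ-a.e. point x ∈ M that is a Lebesgue point of g, the rescaled measures r^{-k}·(φ ↦ ∫ φ((y−x)/r) dμ(y)) converge, as r → 0+, to g(x)·Hᵏ restricted to the approximate tangent plane T_x M; i.e. for every φ ∈ C⁰_c(ℝⁿ), lim_{r→0} r^{-k} ∫ φ((y−x)/r) dμ(y) = g(x) ∫_{T_x M} φ dHᵏ. -/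

import Mathlib

open MeasureTheory Metric Filter

/-- blow-up of a rectifiable measure at Lebesgue points of the density.
`M ⊂ ℝⁿ` is a countably `k`-rectifiable set with `Hᵏ⌊M` locally finite,
`T x` is the approximate tangent plane of `Hᵏ⌊M` at `x` (assumed, `Hᵏ⌊M`-a.e.,
to satisfy the defining blow-up property with multiplicity one), `g` is a
nonnegative locally integrable density with `0 < g < ∞` a.e., and
`μ = g · (Hᵏ⌊M)`.  Then at `Hᵏ`-a.e. `x ∈ M` which is a Lebesgue point of `g`
(i.e. a.e. `x`, since a.e. point is a Lebesgue point), the rescaled measures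
`r^{-k} φ((·-x)/r) dμ` converge to `g(x) Hᵏ⌊T_x M`. -/
theorem stmt1 {n : ℕ} (k : ℕ) (M : Set (EuclideanSpace ℝ (Fin n)))
    (hMrect : ∃ Z : Set (EuclideanSpace ℝ (Fin n)), μH[(k : ℝ)] Z = 0 ∧
      ∃ f : ℕ → (EuclideanSpace ℝ (Fin k) → EuclideanSpace ℝ (Fin n)),
        (∀ i, ∃ L : NNReal, LipschitzWith L (f i)) ∧
        M ⊆ Z ∪ ⋃ i, f i '' Set.univ)
    (hMloc : IsLocallyFiniteMeasure (μH[(k : ℝ)].restrict M))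
    (g : EuclideanSpace ℝ (Fin n) → ℝ)
    (hg : ∀ᵐ x ∂(μH[(k : ℝ)].restrict M), 0 < g x)
    (hgloc : LocallyIntegrable g (μH[(k : ℝ)].restrict M))
    (μ : Measure (EuclideanSpace ℝ (Fin n)))
    (hμ : μ = (μH[(k : ℝ)].restrict M).withDensity (fun x => ENNReal.ofReal (g x)))
    (T : EuclideanSpace ℝ (Fin n) → Submodule ℝ (EuclideanSpace ℝ (Fin n)))
    -- `T x` is the approximate tangent plane of `Hᵏ⌊M` at `x`, `Hᵏ⌊M`-a.e.:
    (hT : ∀ᵐ x ∂(μH[(k : ℝ)].restrict M),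
      ∀ φ : EuclideanSpace ℝ (Fin n) → ℝ, Continuous φ → HasCompactSupport φ →
        Tendsto (fun r : ℝ =>
            (r ^ k)⁻¹ * ∫ y, φ (r⁻¹ • (y - x)) ∂(μH[(k : ℝ)].restrict M))
          (nhdsWithin 0 (Set.Ioi 0))
          (nhds (∫ y in (T x : Set (EuclideanSpace ℝ (Fin n))), φ y ∂(μH[(k : ℝ)])))) :
    ∀ᵐ x ∂(μH[(k : ℝ)].restrict M),
      -- Lebesgue point of `g`:
      (Tendsto (fun r : ℝ =>
          (∫ y in closedBall x r, |g y - g x| ∂(μH[(k : ℝ)].restrict M)) / (r ^ k))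
        (nhdsWithin 0 (Set.Ioi 0)) (nhds 0)) →
      ∀ φ : EuclideanSpace ℝ (Fin n) → ℝ, Continuous φ → HasCompactSupport φ →
        Tendsto (fun r : ℝ => (r ^ k)⁻¹ * ∫ y, φ (r⁻¹ • (y - x)) ∂μ)
          (nhdsWithin 0 (Set.Ioi 0))
          (nhds (g x * ∫ y in (T x : Set (EuclideanSpace ℝ (Fin n))), φ y ∂(μH[(k : ℝ)]))) := by
  classical
  subst hμ
  set ν : Measure (EuclideanSpace ℝ (Fin n)) := μH[(k : ℝ)].restrict M with hν
  haveI := hMloc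
  have hgmeas : AEStronglyMeasurable g ν := hgloc.aestronglyMeasurable
  have hgNN : AEMeasurable (fun y => (g y).toNNReal) ν :=
    measurable_real_toNNReal.comp_aemeasurable hgmeas.aemeasurable
  filter_upwards [hT] with x hx
  intro hleb φ hφc hφs
  -- a bound for φ and a ball containing its support
  obtain ⟨C, hC⟩ : ∃ C, ∀ z, ‖φ z‖ ≤ C := hφs.exists_bound_of_continuous hφc
  have hC0 : 0 ≤ C := le_trans (norm_nonneg _) (hC 0)
  obtain ⟨R₀, hR₀⟩ := (hφs.isCompact.isBounded).subset_closedBall 0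
  set R : ℝ := max R₀ 1 with hRdef
  have hR0 : (0:ℝ) < R := lt_of_lt_of_le one_pos (le_max_right _ _)
  have hRsupp : tsupport φ ⊆ closedBall 0 R :=
    hR₀.trans (closedBall_subset_closedBall (le_max_left _ _))
  -- notation for the rescaled test function
  set ψ : ℝ → EuclideanSpace ℝ (Fin n) → ℝ :=
    fun r y => φ (r⁻¹ • (y - x)) with hψdef
  have hψcont : ∀ r : ℝ, Continuous (ψ r) := fun r =>
    hφc.comp (((continuous_id.sub continuous_const).const_smul r⁻¹))
  have hψsupp : ∀ r : ℝ, 0 < r → ∀ y, ψ r y ≠ 0 → y ∈ closedBall x (r * R) := by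
    intro r hr y hy
    have h1 : r⁻¹ • (y - x) ∈ tsupport φ := subset_tsupport φ hy
    have h2 : ‖r⁻¹ • (y - x)‖ ≤ R := by
      have := hRsupp h1
      simpa [mem_closedBall, dist_eq_norm] using this
    rw [norm_smul, norm_inv, Real.norm_eq_abs, abs_of_pos hr] at h2
    rw [mem_closedBall, dist_eq_norm]
    calc ‖y - x‖ = r * (r⁻¹ * ‖y - x‖) := by field_simp
    _ ≤ r * R := by
        exact mul_le_mul_of_nonneg_left h2 hr.le
  have hψHCS : ∀ r : ℝ, 0 < r → HasCompactSupport (ψ r) := by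
    intro r hr
    refine HasCompactSupport.intro (isCompact_closedBall x (r * R)) ?_
    intro y hy
    by_contra h
    exact hy (hψsupp r hr y h)
  have hψint : ∀ r : ℝ, 0 < r → Integrable (ψ r) ν := fun r hr =>
    (hψcont r).integrable_of_hasCompactSupport (hψHCS r hr)
  have hνball : ∀ s : ℝ, ν (closedBall x s) < ⊤ := fun s =>
    (isCompact_closedBall x s).measure_lt_top
  have hgball : ∀ s : ℝ, IntegrableOn g (closedBall x s) ν := fun s =>
    hgloc.integrableOn_isCompact (isCompact_closedBall x s)
  have hgsubball : ∀ s : ℝ, IntegrableOn (fun y => |g y - g x|) (closedBall x s) ν := by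
    intro s
    exact ((hgball s).sub (integrableOn_const (hνball s).ne)).abs
  -- integrability of ψ r * g
  have hψgint : ∀ r : ℝ, 0 < r → Integrable (fun y => ψ r y * g y) ν := by
    intro r hr
    have heq : (fun y => ψ r y * g y)
        = Set.indicator (closedBall x (r * R)) (fun y => ψ r y * g y) := by
      funext y
      by_cases hy : y ∈ closedBall x (r * R)
      · rw [Set.indicator_of_mem hy]
      · rw [Set.indicator_of_notMem hy]
        have : ψ r y = 0 := by
          by_contra h
          exact hy (hψsupp r hr y h)
        simp [this]
    rw [heq, integrable_indicator_iff measurableSet_closedBall]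
    exact (hgball (r * R)).bdd_mul ((hψcont r).aestronglyMeasurable.restrict)
      (Filter.Eventually.of_forall fun y => hC _)
  -- the eventual identity
  have heq : ∀ᶠ r in nhdsWithin (0:ℝ) (Set.Ioi 0),
      (r ^ k)⁻¹ * ∫ y, ψ r y ∂(ν.withDensity (fun y => ENNReal.ofReal (g y)))
        = g x * ((r ^ k)⁻¹ * ∫ y, ψ r y ∂ν)
          + (r ^ k)⁻¹ * ∫ y, ψ r y * (g y - g x) ∂ν := by
    filter_upwards [self_mem_nhdsWithin] with r hr
    have hr : (0:ℝ) < r := hr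
    have e1 : ∫ y, ψ r y ∂(ν.withDensity (fun y => ENNReal.ofReal (g y)))
        = ∫ y, (g y).toNNReal • ψ r y ∂ν := by
      simp only [ENNReal.ofReal]
      exact integral_withDensity_eq_integral_smul₀ hgNN _
    have e2 : ∫ y, (g y).toNNReal • ψ r y ∂ν = ∫ y, g y * ψ r y ∂ν := by
      refine integral_congr_ae ?_
      filter_upwards [hg] with y hy
      simp [NNReal.smul_def, Real.coe_toNNReal _ hy.le]
    have e3 : ∫ y, g y * ψ r y ∂ν
        = (∫ y, ψ r y * (g y - g x) ∂ν) + g x * ∫ y, ψ r y ∂ν := by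
      have hi1 : Integrable (fun y => ψ r y * (g y - g x)) ν := by
        have : (fun y => ψ r y * (g y - g x))
            = fun y => ψ r y * g y - g x * ψ r y := by
          funext y; ring
        rw [this]
        exact (hψgint r hr).sub ((hψint r hr).const_mul (g x))
      have hi2 : Integrable (fun y => g x * ψ r y) ν := (hψint r hr).const_mul (g x)
      have : (fun y => g y * ψ r y)
          = fun y => ψ r y * (g y - g x) + g x * ψ r y := by
        funext y; ring
      rw [this, integral_add hi1 hi2, integral_const_mul]
    rw [e1, e2, e3]
    ring
  -- the error term tends to 0
  have herr : Tendsto (fun r : ℝ => (r ^ k)⁻¹ * ∫ y, ψ r y * (g y - g x) ∂ν)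
      (nhdsWithin 0 (Set.Ioi 0)) (nhds 0) := by
    have hscale : Tendsto (fun r : ℝ => r * R) (nhdsWithin 0 (Set.Ioi 0))
        (nhdsWithin 0 (Set.Ioi 0)) := by
      apply tendsto_nhdsWithin_of_tendsto_nhds_of_eventually_within
      · have : Tendsto (fun r : ℝ => r * R) (nhds 0) (nhds (0 * R)) :=
          (tendsto_id.mul_const R)
        simpa using this.mono_left nhdsWithin_le_nhds
      · filter_upwards [self_mem_nhdsWithin] with r hr
        exact mul_pos hr hR0
    have hlim : Tendsto (fun r : ℝ =>
        (C * R ^ k) * ((∫ y in closedBall x (r * R), |g y - g x| ∂ν) / ((r * R) ^ k)))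
        (nhdsWithin 0 (Set.Ioi 0)) (nhds ((C * R ^ k) * 0)) :=
      (hleb.comp hscale).const_mul _
    rw [mul_zero] at hlim
    refine squeeze_zero_norm' ?_ hlim
    filter_upwards [self_mem_nhdsWithin] with r hr
    have hr : (0:ℝ) < r := hr
    have hrk : (0:ℝ) < r ^ k := pow_pos hr k
    -- bound the integral
    have hb1 : ‖∫ y, ψ r y * (g y - g x) ∂ν‖
        ≤ C * ∫ y in closedBall x (r * R), |g y - g x| ∂ν := by
      have hset : ∫ y, ψ r y * (g y - g x) ∂ν
          = ∫ y in closedBall x (r * R), ψ r y * (g y - g x) ∂ν := by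
        refine (setIntegral_eq_integral_of_forall_compl_eq_zero ?_).symm
        intro y hy
        have : ψ r y = 0 := by
          by_contra h
          exact hy (hψsupp r hr y h)
        simp [this]
      rw [hset]
      calc ‖∫ y in closedBall x (r * R), ψ r y * (g y - g x) ∂ν‖
          ≤ ∫ y in closedBall x (r * R), ‖ψ r y * (g y - g x)‖ ∂ν :=
            norm_integral_le_integral_norm _
        _ ≤ ∫ y in closedBall x (r * R), C * |g y - g x| ∂ν := by
            refine setIntegral_mono_on ?_ ?_ measurableSet_closedBall ?_
            · have hi1 : Integrable (fun y => ψ r y * (g y - g x)) ν := by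
                have : (fun y => ψ r y * (g y - g x))
                    = fun y => ψ r y * g y - g x * ψ r y := by
                  funext y; ring
                rw [this]
                exact (hψgint r hr).sub ((hψint r hr).const_mul (g x))
              exact hi1.norm.integrableOn
            · exact (hgsubball (r * R)).const_mul C
            · intro y _
              rw [norm_mul]
              refine mul_le_mul_of_nonneg_right (hC _) (norm_nonneg _) |>.trans ?_
              rw [Real.norm_eq_abs]
        _ = C * ∫ y in closedBall x (r * R), |g y - g x| ∂ν := by
            rw [integral_const_mul]
    have hnonneg : 0 ≤ ∫ y in closedBall x (r * R), |g y - g x| ∂ν :=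
      integral_nonneg fun y => abs_nonneg _
    calc ‖(r ^ k)⁻¹ * ∫ y, ψ r y * (g y - g x) ∂ν‖
        = (r ^ k)⁻¹ * ‖∫ y, ψ r y * (g y - g x) ∂ν‖ := by
          rw [norm_mul, Real.norm_eq_abs, abs_of_pos (inv_pos.2 hrk)]
      _ ≤ (r ^ k)⁻¹ * (C * ∫ y in closedBall x (r * R), |g y - g x| ∂ν) :=
          mul_le_mul_of_nonneg_left hb1 (inv_pos.2 hrk).le
      _ = (C * R ^ k) * ((∫ y in closedBall x (r * R), |g y - g x| ∂ν) / ((r * R) ^ k)) := by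
          rw [mul_pow]
          field_simp
  -- combine
  have hmain : Tendsto (fun r : ℝ =>
      g x * ((r ^ k)⁻¹ * ∫ y, ψ r y ∂ν)
        + (r ^ k)⁻¹ * ∫ y, ψ r y * (g y - g x) ∂ν)
      (nhdsWithin 0 (Set.Ioi 0))
      (nhds (g x * (∫ y in (T x : Set (EuclideanSpace ℝ (Fin n))), φ y ∂(μH[(k : ℝ)])) + 0)) :=
    ((hx φ hφc hφs).const_mul (g x)).add herr
  rw [add_zero] at hmain
  exact hmain.congr' (heq.mono fun r h => h.symm)
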